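/- Let X be a nonempty set, v a capacity on X with dual v*, and define for each bounded κ : X → ℝ the value W(κ) = min{ ∫κ dv, ∫κ dv* }. Assume the Choquet integral satisfies, for all bounded κ, all c ∈ ℝ and λ > 0: ∫(λκ + c) dv = λ∫κ dv + c (constant-additivity and positive homogeneity, which hold by definition), and ∫(−κ)dv = −∫κ dv*. Then W satisfies: for all bounded κ, ρ, all α ∈ (0,1) and c ∈ ℝ, if W(κ) = W(ρ) and ακ + (1−α)ρ is the constant function c, then c ≥ W(κ). -/

import Mathlib

open Set MeasureTheory

noncomputable section

def IsCapacity {X : Type*} (v : Set X → ℝ) : Prop :=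
  v ∅ = 0 ∧ v Set.univ = 1 ∧ ∀ A B : Set X, A ⊆ B → v A ≤ v B

def dualCap {X : Type*} (v : Set X → ℝ) : Set X → ℝ := fun A => 1 - v Aᶜ

def choquet {X : Type*} (v : Set X → ℝ) (κ : X → ℝ) : ℝ :=
  (∫ β in Set.Iio (0 : ℝ), (v {x | β ≤ κ x} - 1)) +
    ∫ β in Set.Ioi (0 : ℝ), v {x | β ≤ κ x}

def Bdd {X : Type*} (κ : X → ℝ) : Prop := ∃ M : ℝ, ∀ x, |κ x| ≤ M

/-- the functional W(κ) = min{∫κ dv, ∫κ dv*} satisfies the weak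
uncertainty aversion inequality. -/
theorem stmt13 {X : Type*} [Nonempty X] (v : Set X → ℝ) (hv : IsCapacity v)
    (hhom : ∀ w : Set X → ℝ, IsCapacity w → ∀ κ : X → ℝ, Bdd κ →
        ∀ l c : ℝ, 0 < l →
          choquet w (fun x => l * κ x + c) = l * choquet w κ + c)
    (hdual : ∀ w : Set X → ℝ, IsCapacity w → ∀ κ : X → ℝ, Bdd κ →
        choquet w (fun x => -κ x) = - choquet (dualCap w) κ) :
    ∀ κ ρ : X → ℝ, Bdd κ → Bdd ρ → ∀ α c : ℝ, 0 < α → α < 1 →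
      min (choquet v κ) (choquet (dualCap v) κ)
          = min (choquet v ρ) (choquet (dualCap v) ρ) →
      (∀ x, α * κ x + (1 - α) * ρ x = c) →
      c ≥ min (choquet v κ) (choquet (dualCap v) κ) := by
  intro κ ρ hκ hρ α c hα hα1 hmin heq
  have hvd : IsCapacity (dualCap v) := by
    refine ⟨by simp [dualCap, hv.2.1], by simp [dualCap, hv.1], fun A B h => ?_⟩
    have := hv.2.2 Bᶜ Aᶜ (Set.compl_subset_compl.mpr h)
    simp only [dualCap]; linarith
  have hdd : dualCap (dualCap v) = v := by
    funext A; simp [dualCap]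
  have h1α : (0:ℝ) < 1 - α := by linarith
  set l := α / (1 - α) with hl_def
  have hl : 0 < l := div_pos hα h1α
  have hlα : l * (1 - α) = α := div_mul_cancel₀ _ h1α.ne'
  set c' := c / (1 - α) with hc'_def
  have hcα : c' * (1 - α) = c := div_mul_cancel₀ _ h1α.ne'
  have hρeq : ρ = fun x => l * (-κ x) + c' := by
    funext x
    have h := heq x
    field_simp [hl_def, hc'_def]
    have h0 : (ρ x - (-(l * κ x) + c')) * (1 - α) = 0 := by
      linear_combination h + κ x * hlα - hcα
    rcases mul_eq_zero.mp h0 with h2 | h2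
    · linarith
    · linarith
  have hnκ : Bdd (fun x => -κ x) := by
    obtain ⟨M, hM⟩ := hκ; exact ⟨M, fun x => by simpa using hM x⟩
  have e1 : choquet v ρ = l * (- choquet (dualCap v) κ) + c' := by
    rw [hρeq, hhom v hv _ hnκ l _ hl, hdual v hv κ hκ]
  have e2 : choquet (dualCap v) ρ = l * (- choquet v κ) + c' := by
    rw [hρeq, hhom (dualCap v) hvd _ hnκ l _ hl, hdual (dualCap v) hvd κ hκ, hdd]
  set a := choquet v κ
  set b := choquet (dualCap v) κ
  rw [e1, e2] at hmin
  rcases le_total a b with h | h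
  · rw [min_eq_left h] at hmin ⊢
    rw [min_eq_left (by nlinarith : l * (-b) + c' ≤ l * (-a) + c')] at hmin
    have key : a * (1 - α) = -b * α + c := by
      calc a * (1 - α) = (l * (-b) + c') * (1 - α) := by rw [hmin]
        _ = (l * (1 - α)) * (-b) + c' * (1 - α) := by ring
        _ = -b * α + c := by rw [hlα, hcα]; ring
    nlinarith [mul_le_mul_of_nonneg_left h hα.le]
  · rw [min_eq_right h] at hmin ⊢
    rw [min_eq_right (by nlinarith : l * (-a) + c' ≤ l * (-b) + c')] at hmin
    have key : b * (1 - α) = -a * α + c := by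
      calc b * (1 - α) = (l * (-a) + c') * (1 - α) := by rw [hmin]
        _ = (l * (1 - α)) * (-a) + c' * (1 - α) := by ring
        _ = -a * α + c := by rw [hlα, hcα]; ring
    nlinarith [mul_le_mul_of_nonneg_left h hα.le]
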